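/- Let ρ > 0 and T > 0, and let φ, ψ : ℝ → ℝ be measurable with ∫_ℝ φ^2 dx ≤ 1 and ∫_ℝ ψ^2 dx ≤ 1. Then ∫_{ℝ^2} f_2(x_1, x_2) · |φ(x_1)| · |ψ(x_2)| dx_1 dx_2 ≤ 3/ρ, with integrals taken with respect to Lebesgue measure. -/

import Mathlib

set_option maxHeartbeats 1000000

open Real MeasureTheory ENNReal

/-- The second chaos kernel of the quadratic functional of the Ornstein–Uhlenbeck Lévy
process. -/
noncomputable def ouKernel (ρ T x₁ x₂ : ℝ) : ℝ :=
  (if x₁ ≤ T then (1 : ℝ) else 0) * (if x₂ ≤ T then (1 : ℝ) else 0) *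
    Real.exp (ρ * (x₁ + x₂)) *
    ((1 - Real.exp (-2 * ρ * T)) * (if max x₁ x₂ ≤ 0 then (1 : ℝ) else 0) +
      (Real.exp (-2 * ρ * max x₁ x₂) - Real.exp (-2 * ρ * T)) *
        (if 0 < max x₁ x₂ then (1 : ℝ) else 0))

section Aux

open Set Filter Topology

lemma myIoi (ρ c : ℝ) (hρ : 0 < ρ) :
    IntegrableOn (fun y : ℝ => Real.exp (-(ρ * (y - c)))) (Ioi c) ∧
    ∫ y in Ioi c, Real.exp (-(ρ * (y - c))) = 1 / ρ := by
  have hderiv : ∀ x ∈ Ici c, HasDerivAt (fun y => -Real.exp (-(ρ * (y - c))) / ρ)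
      (Real.exp (-(ρ * (x - c)))) x := by
    intro x _
    have h1 : HasDerivAt (fun y : ℝ => -(ρ * (y - c))) (-ρ) x := by
      simpa using (((hasDerivAt_id x).sub_const c).const_mul ρ).fun_neg
    have h2 := (h1.exp).fun_neg.div_const ρ
    exact h2.congr_deriv (by field_simp)
  have hpos : ∀ x ∈ Ioi c, 0 ≤ Real.exp (-(ρ * (x - c))) := fun x _ => (Real.exp_pos _).le
  have htend : Tendsto (fun y => -Real.exp (-(ρ * (y - c))) / ρ) atTop (𝓝 0) := by
    have h0 : Tendsto (fun y : ℝ => -(ρ * (y - c))) atTop atBot := by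
      apply tendsto_neg_atTop_atBot.comp
      exact (tendsto_atTop_add_const_right atTop (-c) tendsto_id).const_mul_atTop hρ
    have := (Real.tendsto_exp_atBot.comp h0).neg.div_const ρ
    simpa using this
  refine ⟨integrableOn_Ioi_deriv_of_nonneg' hderiv hpos htend, ?_⟩
  rw [integral_Ioi_of_hasDerivAt_of_nonneg' hderiv hpos htend]
  simp
  ring

lemma myIic (ρ c : ℝ) (hρ : 0 < ρ) :
    IntegrableOn (fun y : ℝ => Real.exp (-(ρ * (c - y)))) (Iic c) ∧
    ∫ y in Iic c, Real.exp (-(ρ * (c - y))) = 1 / ρ := by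
  have hint : IntegrableOn (fun y : ℝ => Real.exp (-(ρ * (c - y)))) (Iic c) := by
    have h1 := (myIoi ρ (-c) hρ).1
    have h2 := (MeasurePreserving.integrableOn_comp_preimage
      (Measure.measurePreserving_neg (volume : Measure ℝ))
      (Homeomorph.neg ℝ).measurableEmbedding).2 h1
    have hs : (Neg.neg ⁻¹' Ioi (-c) : Set ℝ) = Iio c := by
      ext y; simp [neg_lt_neg_iff]
    rw [hs] at h2
    have h3 : IntegrableOn (fun y : ℝ => Real.exp (-(ρ * (c - y)))) (Iio c) := by
      apply h2.congr_fun _ measurableSet_Iio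
      intro y _
      simp only [Function.comp]
      ring_nf
    exact h3.congr_set_ae Iio_ae_eq_Iic.symm
  have hderiv : ∀ x ∈ Iic c, HasDerivAt (fun y => Real.exp (-(ρ * (c - y))) / ρ)
      (Real.exp (-(ρ * (c - x)))) x := by
    intro x _
    have h1 : HasDerivAt (fun y : ℝ => -(ρ * (c - y))) ρ x := by
      simpa using (((hasDerivAt_id x).const_sub c).const_mul ρ).fun_neg
    have h2 := (h1.exp).div_const ρ
    exact h2.congr_deriv (by field_simp)
  have htend : Tendsto (fun y => Real.exp (-(ρ * (c - y))) / ρ) atBot (𝓝 0) := by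
    have h0 : Tendsto (fun y : ℝ => -(ρ * (c - y))) atBot atBot := by
      have : Tendsto (fun y : ℝ => ρ * (y - c)) atBot atBot :=
        (tendsto_atBot_add_const_right atBot (-c) tendsto_id).const_mul_atBot hρ
      refine this.congr fun y => by ring
    have := (Real.tendsto_exp_atBot.comp h0).div_const ρ
    simpa using this
  refine ⟨hint, ?_⟩
  rw [integral_Iic_of_hasDerivAt_of_tendsto' hderiv hint htend]
  simp [hρ.ne']

lemma myLint (ρ c : ℝ) (hρ : 0 < ρ) :
    ∫⁻ y : ℝ, ENNReal.ofReal (Real.exp (-(ρ * |c - y|))) = ENNReal.ofReal (2 / ρ) := by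
  rw [← lintegral_add_compl (μ := volume)
    (fun y => ENNReal.ofReal (Real.exp (-(ρ * |c - y|)))) (measurableSet_Ioi (a := c)),
    compl_Ioi]
  have e1 : ∫⁻ y in Ioi c, ENNReal.ofReal (Real.exp (-(ρ * |c - y|)))
      = ENNReal.ofReal (1 / ρ) := by
    rw [setLIntegral_congr_fun_ae measurableSet_Ioi (ae_of_all _
      (fun y (hy : c < y) => by rw [abs_of_nonpos (by linarith), neg_sub])),
      ← ofReal_integral_eq_lintegral_ofReal (myIoi ρ c hρ).1
        (ae_of_all _ fun y => (Real.exp_pos _).le), (myIoi ρ c hρ).2]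
  have e2 : ∫⁻ y in Iic c, ENNReal.ofReal (Real.exp (-(ρ * |c - y|)))
      = ENNReal.ofReal (1 / ρ) := by
    rw [setLIntegral_congr_fun_ae measurableSet_Iic (ae_of_all _
      (fun y (hy : y ≤ c) => by rw [abs_of_nonneg (by linarith)])),
      ← ofReal_integral_eq_lintegral_ofReal (myIic ρ c hρ).1
        (ae_of_all _ fun y => (Real.exp_pos _).le), (myIic ρ c hρ).2]
  rw [e1, e2, ← ENNReal.ofReal_add (by positivity) (by positivity)]
  norm_num
  ring_nf

lemma ouKernel_le (ρ T x₁ x₂ : ℝ) (hρ : 0 < ρ) :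
    ouKernel ρ T x₁ x₂ ≤ Real.exp (-(ρ * |x₁ - x₂|)) := by
  have key : Real.exp (ρ * (x₁ + x₂)) * Real.exp (-2 * ρ * max x₁ x₂)
      = Real.exp (-(ρ * |x₁ - x₂|)) := by
    rw [← Real.exp_add]
    congr 1
    rcases le_total x₁ x₂ with h | h
    · rw [max_eq_right h, abs_of_nonpos (by linarith)]; ring
    · rw [max_eq_left h, abs_of_nonneg (by linarith)]; ring
  unfold ouKernel
  rcases le_or_gt (max x₁ x₂) 0 with hm | hm
  · rw [if_pos hm, if_neg (not_lt.mpr hm)]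
    have h1 : Real.exp (-2 * ρ * max x₁ x₂) ≥ 1 := by
      rw [← Real.exp_zero]
      apply Real.exp_le_exp.mpr
      nlinarith
    have hTpos : 0 < Real.exp (-2 * ρ * T) := Real.exp_pos _
    split_ifs <;>
    · simp only [mul_one, mul_zero, one_mul, zero_mul, add_zero, zero_add]
      nlinarith [Real.exp_pos (ρ * (x₁ + x₂)), Real.exp_pos (-(ρ * |x₁ - x₂|))]
  · rw [if_pos hm, if_neg (not_le.mpr hm)]
    have hTpos : 0 < Real.exp (-2 * ρ * T) := Real.exp_pos _
    have h2' : 0 ≤ Real.exp (-2 * ρ * max x₁ x₂) := (Real.exp_pos _).le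
    split_ifs <;>
    · simp only [mul_one, mul_zero, one_mul, zero_mul, add_zero, zero_add]
      nlinarith [Real.exp_pos (ρ * (x₁ + x₂)), Real.exp_pos (-(ρ * |x₁ - x₂|))]

end Aux

/-- The operator norm bound: for `φ, ψ` in the unit ball of `L_2(ℝ)`,
`∫∫ f₂(x₁,x₂) |φ(x₁)| |ψ(x₂)| dx₁ dx₂ ≤ 3/ρ`. -/
theorem stmt_11 (ρ T : ℝ) (hρ : 0 < ρ) (hT : 0 < T)
    (φ ψ : ℝ → ℝ) (hφ : Measurable φ) (hψ : Measurable ψ)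
    (hφ2 : (∫⁻ x : ℝ, ENNReal.ofReal (φ x ^ 2)) ≤ 1)
    (hψ2 : (∫⁻ x : ℝ, ENNReal.ofReal (ψ x ^ 2)) ≤ 1) :
    (∫⁻ x₁ : ℝ, ∫⁻ x₂ : ℝ,
        ENNReal.ofReal (ouKernel ρ T x₁ x₂ * |φ x₁| * |ψ x₂|)) ≤
      ENNReal.ofReal (3 / ρ) := by
  classical
  set G : ℝ → ℝ → ℝ≥0∞ := fun a b => ENNReal.ofReal (Real.exp (-(ρ * |a - b|))) with hG
  set c₁ : ℝ → ℝ≥0∞ := fun x => ENNReal.ofReal (φ x ^ 2 / 2) with hc₁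
  set c₂ : ℝ → ℝ≥0∞ := fun x => ENNReal.ofReal (ψ x ^ 2 / 2) with hc₂
  -- measurability
  have mG : Measurable fun p : ℝ × ℝ => G p.1 p.2 := by
    apply Measurable.ennreal_ofReal
    fun_prop
  have mc₁ : Measurable c₁ := ((hφ.pow_const 2).div_const 2).ennreal_ofReal
  have mc₂ : Measurable c₂ := ((hψ.pow_const 2).div_const 2).ennreal_ofReal
  -- pointwise bound
  have hpt : ∀ x₁ x₂ : ℝ, ENNReal.ofReal (ouKernel ρ T x₁ x₂ * |φ x₁| * |ψ x₂|)
      ≤ c₁ x₁ * G x₁ x₂ + c₂ x₂ * G x₁ x₂ := by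
    intro x₁ x₂
    rw [hG, hc₁, hc₂, ← ENNReal.ofReal_mul (by positivity),
      ← ENNReal.ofReal_mul (by positivity),
      ← ENNReal.ofReal_add (by positivity) (by positivity)]
    apply ENNReal.ofReal_le_ofReal
    have h0 := ouKernel_le ρ T x₁ x₂ hρ
    have hE0 : (0:ℝ) < Real.exp (-(ρ * |x₁ - x₂|)) := Real.exp_pos _
    have hab : |φ x₁| * |ψ x₂| ≤ φ x₁ ^ 2 / 2 + ψ x₂ ^ 2 / 2 := by
      nlinarith [sq_nonneg (|φ x₁| - |ψ x₂|), sq_abs (φ x₁), sq_abs (ψ x₂)]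
    calc ouKernel ρ T x₁ x₂ * |φ x₁| * |ψ x₂|
        ≤ Real.exp (-(ρ * |x₁ - x₂|)) * (|φ x₁| * |ψ x₂|) := by
          rw [mul_assoc]
          exact mul_le_mul_of_nonneg_right h0 (by positivity)
      _ ≤ Real.exp (-(ρ * |x₁ - x₂|)) * (φ x₁ ^ 2 / 2 + ψ x₂ ^ 2 / 2) :=
          mul_le_mul_of_nonneg_left hab hE0.le
      _ = φ x₁ ^ 2 / 2 * Real.exp (-(ρ * |x₁ - x₂|))
            + ψ x₂ ^ 2 / 2 * Real.exp (-(ρ * |x₁ - x₂|)) := by ring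
  have hGint : ∀ x₁, ∫⁻ x₂, G x₁ x₂ = ENNReal.ofReal (2 / ρ) := fun x₁ => myLint ρ x₁ hρ
  have hGint' : ∀ x₂, ∫⁻ x₁, G x₁ x₂ = ENNReal.ofReal (2 / ρ) := by
    intro x₂
    simp_rw [hG, abs_sub_comm]
    exact myLint ρ x₂ hρ
  -- the main estimate
  have step1 : (∫⁻ x₁ : ℝ, ∫⁻ x₂ : ℝ, ENNReal.ofReal (ouKernel ρ T x₁ x₂ * |φ x₁| * |ψ x₂|))
      ≤ ∫⁻ x₁, ∫⁻ x₂, (c₁ x₁ * G x₁ x₂ + c₂ x₂ * G x₁ x₂) :=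
    lintegral_mono fun x₁ => lintegral_mono fun x₂ => hpt x₁ x₂
  have step2 : (∫⁻ x₁, ∫⁻ x₂, (c₁ x₁ * G x₁ x₂ + c₂ x₂ * G x₁ x₂))
      = (∫⁻ x₁, c₁ x₁) * ENNReal.ofReal (2 / ρ)
        + (∫⁻ x₂, c₂ x₂) * ENNReal.ofReal (2 / ρ) := by
    have inner : ∀ x₁, ∫⁻ x₂, (c₁ x₁ * G x₁ x₂ + c₂ x₂ * G x₁ x₂)
        = c₁ x₁ * ENNReal.ofReal (2 / ρ) + ∫⁻ x₂, c₂ x₂ * G x₁ x₂ := by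
      intro x₁
      have mGx : Measurable fun x₂ => G x₁ x₂ := Measurable.ennreal_ofReal (by fun_prop)
      rw [lintegral_add_left (show Measurable fun x₂ => c₁ x₁ * G x₁ x₂ from measurable_const.mul mGx)]
      congr 1
      rw [lintegral_const_mul' _ _ ENNReal.ofReal_ne_top, hGint x₁]
    simp_rw [inner]
    rw [lintegral_add_left (mc₁.mul_const _)]
    congr 1
    · rw [lintegral_mul_const' _ _ ENNReal.ofReal_ne_top]
    · rw [lintegral_lintegral_swap (by exact ((mc₂.comp measurable_snd).mul mG).aemeasurable)]
      have : ∀ x₂, ∫⁻ x₁, c₂ x₂ * G x₁ x₂ = c₂ x₂ * ENNReal.ofReal (2 / ρ) := by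
        intro x₂
        rw [lintegral_const_mul' _ _ ENNReal.ofReal_ne_top, hGint' x₂]
      simp_rw [this]
      rw [lintegral_mul_const' _ _ ENNReal.ofReal_ne_top]
  have hhalf : ∀ f : ℝ → ℝ, Measurable f → (∫⁻ x : ℝ, ENNReal.ofReal (f x ^ 2)) ≤ 1 →
      (∫⁻ x : ℝ, ENNReal.ofReal (f x ^ 2 / 2)) ≤ ENNReal.ofReal (1 / 2) := by
    intro f hf hf1
    have : ∀ x : ℝ, ENNReal.ofReal (f x ^ 2 / 2)
        = ENNReal.ofReal (f x ^ 2) * ENNReal.ofReal (1 / 2) := by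
      intro x
      rw [← ENNReal.ofReal_mul (by positivity)]
      ring_nf
    simp_rw [this]
    rw [lintegral_mul_const' _ _ ENNReal.ofReal_ne_top]
    calc (∫⁻ x : ℝ, ENNReal.ofReal (f x ^ 2)) * ENNReal.ofReal (1 / 2)
        ≤ 1 * ENNReal.ofReal (1 / 2) := by gcongr
      _ = ENNReal.ofReal (1 / 2) := one_mul _
  calc (∫⁻ x₁ : ℝ, ∫⁻ x₂ : ℝ, ENNReal.ofReal (ouKernel ρ T x₁ x₂ * |φ x₁| * |ψ x₂|))
      ≤ (∫⁻ x₁, c₁ x₁) * ENNReal.ofReal (2 / ρ)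
        + (∫⁻ x₂, c₂ x₂) * ENNReal.ofReal (2 / ρ) := step2 ▸ step1
    _ ≤ ENNReal.ofReal (1 / 2) * ENNReal.ofReal (2 / ρ)
        + ENNReal.ofReal (1 / 2) * ENNReal.ofReal (2 / ρ) := by
        gcongr
        · exact hhalf φ hφ hφ2
        · exact hhalf ψ hψ hψ2
    _ = ENNReal.ofReal (2 / ρ) := by
        rw [← two_mul, ← ENNReal.ofReal_mul (by positivity), ← ENNReal.ofReal_ofNat 2,
          ← ENNReal.ofReal_mul (by positivity)]
        congr 1
        ring
    _ ≤ ENNReal.ofReal (3 / ρ) := by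
        apply ENNReal.ofReal_le_ofReal
        gcongr
        norm_num
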